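/- If F is the uniform distribution on [0,1], then for every positive integer m, sup_{x ∈ [0,1]} |F^{(m)}(x) − F(x)| = 1/(m+1); that is, the lower bound rate O(1/(m+1)) for the Kolmogorov–Smirnov deviation of the binomial mixture CDF is attained by the uniform distribution. -/

import Mathlib

open MeasureTheory ProbabilityTheory Real

noncomputable section

/-- pmf of Binomial(m, s) at k. -/
def binomPMFr (m k : ℕ) (s : ℝ) : ℝ := (m.choose k : ℝ) * s ^ k * (1 - s) ^ (m - k)

/-- Law of ŝ = X/m where X ~ Binomial(m, s). -/
def binomLaw (m : ℕ) (s : ℝ) : Measure ℝ :=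
  ∑ k ∈ Finset.range (m + 1), ENNReal.ofReal (binomPMFr m k s) • Measure.dirac ((k : ℝ) / m)

/-- Binomial-mixture law of ŝ where s ~ μ. -/
def mixLaw (μ : Measure ℝ) (m : ℕ) : Measure ℝ := μ.bind (binomLaw m)

/-- CDF of a measure. -/
def cdfOf (μ : Measure ℝ) (x : ℝ) : ℝ := (μ (Set.Iic x)).toReal

/-- The uniform distribution on `[0,1]`. -/
def unif : Measure ℝ := volume.restrict (Set.Icc (0:ℝ) 1)

lemma integ_one_sub_pow (n : ℕ) : ∫ s in (0:ℝ)..1, (1-s)^n = 1/(n+1) := by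
  have h : ∀ s ∈ Set.uIcc (0:ℝ) 1, HasDerivAt (fun t : ℝ => -(1-t)^(n+1)/((n:ℝ)+1)) ((1-s)^n) s := by
    intro s _
    have h2 := (((hasDerivAt_id s).const_sub 1).pow (n+1)).neg.div_const ((n:ℝ)+1)
    refine h2.congr_deriv (Eq.symm ?_)
    have : (n:ℝ)+1 ≠ 0 := by positivity
    simp only [id_eq, Nat.add_sub_cancel]
    push_cast
    field_simp
  rw [intervalIntegral.integral_eq_sub_of_hasDerivAt h
    (by apply Continuous.intervalIntegrable; continuity)]
  have : (n:ℝ)+1 ≠ 0 := by positivity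
  field_simp
  norm_num

lemma step_int (n k : ℕ) (hk : k < n) :
    ((k:ℝ)+1) * ∫ s in (0:ℝ)..1, s^k*(1-s)^(n-k)
      = ((n:ℝ)-k) * ∫ s in (0:ℝ)..1, s^(k+1)*(1-s)^(n-(k+1)) := by
  have hd : ∀ s ∈ Set.uIcc (0:ℝ) 1, HasDerivAt (fun t : ℝ => t^(k+1)*(1-t)^(n-k))
      (((k:ℝ)+1) * (s^k*(1-s)^(n-k)) - ((n:ℝ)-k) * (s^(k+1)*(1-s)^(n-(k+1)))) s := by
    intro s _
    have h1 : HasDerivAt (fun t : ℝ => t^(k+1)) (((k:ℝ)+1) * s^k) s := by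
      have := hasDerivAt_pow (k+1) s
      refine this.congr_deriv (Eq.symm ?_); push_cast; ring_nf
    have h2 : HasDerivAt (fun t : ℝ => (1-t)^(n-k)) (-( ((n:ℝ)-k) * (1-s)^(n-(k+1)))) s := by
      have := (((hasDerivAt_id s).const_sub 1).pow (n-k))
      refine this.congr_deriv (Eq.symm ?_)
      have : n - k - 1 = n - (k+1) := by omega
      rw [this]
      have hc : ((n - k : ℕ) : ℝ) = (n:ℝ) - k := by
        have := Nat.cast_sub hk.le (R := ℝ); linarith
      simp [id_eq, hc]
    have := h1.mul h2
    refine this.congr_deriv (Eq.symm ?_)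
    ring
  have key := intervalIntegral.integral_eq_sub_of_hasDerivAt hd
    (by apply Continuous.intervalIntegrable; continuity)
  rw [intervalIntegral.integral_sub, intervalIntegral.integral_const_mul,
    intervalIntegral.integral_const_mul] at key
  · simp only [one_pow, sub_self, zero_pow (by omega : n - k ≠ 0)] at key
    simp at key
    linarith
  · exact (by apply Continuous.intervalIntegrable; continuity :
      IntervalIntegrable (fun s : ℝ => ((k:ℝ)+1) * (s^k*(1-s)^(n-k))) volume 0 1)
  · apply Continuous.intervalIntegrable; continuity

lemma binom_int (n : ℕ) : ∀ k, k ≤ n → ∫ s in (0:ℝ)..1, binomPMFr n k s = 1/((n:ℝ)+1) := by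
  intro k
  induction k with
  | zero =>
    intro _
    simp only [binomPMFr, Nat.choose_zero_right, Nat.cast_one, pow_zero, one_mul,
      Nat.sub_zero, mul_one]
    simpa using integ_one_sub_pow n
  | succ k ih =>
    intro hk
    have hkn : k < n := hk
    have hI := ih hkn.le
    have hstep := step_int n k hkn
    have hnk : ((n:ℝ) - k) ≠ 0 := by
      have : (k:ℝ) < n := by exact_mod_cast hkn
      linarith
    have hc : (n.choose (k+1) : ℝ) * ((k:ℝ)+1) = (n.choose k : ℝ) * ((n:ℝ)-k) := by
      have h2 : n.choose (k+1) * (k+1) = n.choose k * (n - k) := Nat.choose_succ_right_eq n k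
      have h4 : ((n.choose (k+1) * (k+1) : ℕ) : ℝ) = ((n.choose k * (n - k) : ℕ) : ℝ) := by
        exact_mod_cast congrArg (Nat.cast (R := ℝ)) h2
      push_cast [Nat.cast_sub hkn.le] at h4
      linarith
    -- rewrite integrals
    have e1 : ∫ s in (0:ℝ)..1, binomPMFr n (k+1) s
        = (n.choose (k+1) : ℝ) * ∫ s in (0:ℝ)..1, s^(k+1)*(1-s)^(n-(k+1)) := by
      rw [← intervalIntegral.integral_const_mul]
      apply intervalIntegral.integral_congr
      intro s _
      simp [binomPMFr]; ring
    have e2 : ∫ s in (0:ℝ)..1, binomPMFr n k s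
        = (n.choose k : ℝ) * ∫ s in (0:ℝ)..1, s^k*(1-s)^(n-k) := by
      rw [← intervalIntegral.integral_const_mul]
      apply intervalIntegral.integral_congr
      intro s _
      simp [binomPMFr]; ring
    rw [e1]
    rw [e2] at hI
    apply mul_left_cancel₀ hnk
    set I : ℝ := ∫ s in (0:ℝ)..1, s^k*(1-s)^(n-k)
    set J : ℝ := ∫ s in (0:ℝ)..1, s^(k+1)*(1-s)^(n-(k+1))
    calc ((n:ℝ)-k) * ((n.choose (k+1) : ℝ) * J)
        = (n.choose (k+1) : ℝ) * (((n:ℝ)-k) * J) := by ring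
      _ = (n.choose (k+1) : ℝ) * (((k:ℝ)+1) * I) := by rw [← hstep]
      _ = ((n.choose (k+1) : ℝ) * ((k:ℝ)+1)) * I := by ring
      _ = ((n.choose k : ℝ) * ((n:ℝ)-k)) * I := by rw [hc]
      _ = ((n:ℝ)-k) * ((n.choose k : ℝ) * I) := by ring
      _ = ((n:ℝ)-k) * (1/((n:ℝ)+1)) := by rw [hI]

lemma binomPMFr_cont (m k : ℕ) : Continuous (binomPMFr m k) := by
  unfold binomPMFr; continuity

lemma measurable_binomLaw (m : ℕ) : Measurable (binomLaw m) := by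
  apply Measure.measurable_of_measurable_coe
  intro s hs
  simp only [binomLaw, Measure.finset_sum_apply, Measure.smul_apply, smul_eq_mul]
  apply Finset.measurable_sum
  intro k _
  exact (ENNReal.measurable_ofReal.comp (binomPMFr_cont m k).measurable).mul_const _

lemma cdf_unif (x : ℝ) (hx : x ∈ Set.Icc (0:ℝ) 1) : cdfOf unif x = x := by
  rw [cdfOf, unif, Measure.restrict_apply measurableSet_Iic]
  have h : Set.Iic x ∩ Set.Icc 0 1 = Set.Icc 0 x := by
    ext y
    simp only [Set.mem_inter_iff, Set.mem_Iic, Set.mem_Icc]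
    constructor
    · rintro ⟨h1, h2, _⟩; exact ⟨h2, h1⟩
    · rintro ⟨h1, h2⟩; exact ⟨h2, h1, h2.trans hx.2⟩
  rw [h, Real.volume_Icc]
  rw [ENNReal.toReal_ofReal (by linarith [hx.1])]
  ring

lemma mix_cdf (m : ℕ) (hm : 1 ≤ m) (x : ℝ) (hx : x ∈ Set.Icc (0:ℝ) 1) :
    cdfOf (mixLaw unif m) x = ((⌊(m:ℝ)*x⌋₊ : ℝ) + 1)/((m:ℝ)+1) := by
  obtain ⟨hx0, hx1⟩ := hx
  have hm0 : (0:ℝ) < m := by exact_mod_cast hm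
  set N := ⌊(m:ℝ)*x⌋₊ with hN
  have hNm : N ≤ m := by
    have : (m:ℝ)*x ≤ (m:ℝ) := by nlinarith
    calc N ≤ ⌊(m:ℝ)⌋₊ := Nat.floor_mono this
      _ = m := Nat.floor_natCast m
  have hcond : ∀ k : ℕ, ((k:ℝ)/m ≤ x ↔ k ≤ N) := by
    intro k
    rw [div_le_iff₀ hm0, hN, Nat.le_floor_iff (by positivity)]
    constructor <;> intro h <;> linarith
  rw [cdfOf, mixLaw, Measure.bind_apply measurableSet_Iic (measurable_binomLaw m).aemeasurable]
  have hlawIic : ∀ s : ℝ, binomLaw m s (Set.Iic x)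
      = ∑ k ∈ Finset.range (m+1), ENNReal.ofReal (binomPMFr m k s)
          * (if (k:ℝ)/m ≤ x then 1 else 0) := by
    intro s
    simp only [binomLaw, Measure.finset_sum_apply, Measure.smul_apply, smul_eq_mul,
      Measure.dirac_apply' _ measurableSet_Iic, Set.indicator, Set.mem_Iic, Pi.one_apply]
  simp only [hlawIic]
  rw [lintegral_finset_sum _ (fun k _ =>
    (((binomPMFr_cont m k).measurable.ennreal_ofReal).mul_const _))]
  have hterm : ∀ k ∈ Finset.range (m+1),
      (∫⁻ s, ENNReal.ofReal (binomPMFr m k s) * (if (k:ℝ)/m ≤ x then 1 else 0) ∂unif)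
      = ENNReal.ofReal (1/((m:ℝ)+1)) * (if (k:ℝ)/m ≤ x then 1 else 0) := by
    intro k hk
    have hkm : k ≤ m := by
      have := Finset.mem_range.mp hk; omega
    rw [lintegral_mul_const _ ((binomPMFr_cont m k).measurable.ennreal_ofReal)]
    congr 1
    rw [unif, ← ofReal_integral_eq_lintegral_ofReal
      ((binomPMFr_cont m k).integrableOn_Icc)
      (ae_restrict_of_forall_mem measurableSet_Icc (by
        intro s hs
        have h1 : (0:ℝ) ≤ s := hs.1
        have h2 : s ≤ 1 := hs.2
        unfold binomPMFr
        have : (0:ℝ) ≤ 1 - s := by linarith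
        positivity))]
    congr 1
    rw [MeasureTheory.integral_Icc_eq_integral_Ioc,
      ← intervalIntegral.integral_of_le (by norm_num : (0:ℝ) ≤ 1)]
    exact binom_int m k hkm
  rw [Finset.sum_congr rfl hterm]
  have hsum : ∑ k ∈ Finset.range (m+1),
      ENNReal.ofReal (1/((m:ℝ)+1)) * (if (k:ℝ)/m ≤ x then 1 else 0)
      = (N+1 : ℕ) * ENNReal.ofReal (1/((m:ℝ)+1)) := by
    have : ∀ k ∈ Finset.range (m+1),
        ENNReal.ofReal (1/((m:ℝ)+1)) * (if (k:ℝ)/m ≤ x then 1 else 0)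
        = if k ∈ Finset.range (N+1) then ENNReal.ofReal (1/((m:ℝ)+1)) else 0 := by
      intro k _
      by_cases h : k ≤ N
      · rw [if_pos ((hcond k).mpr h), if_pos (Finset.mem_range.mpr (by omega)), mul_one]
      · rw [if_neg (fun hc => h ((hcond k).mp hc)),
          if_neg (fun hc => h (by have := Finset.mem_range.mp hc; omega)), mul_zero]
    rw [Finset.sum_congr rfl this, Finset.sum_ite_mem,
      Finset.inter_eq_right.mpr (Finset.range_subset_range.mpr (by omega)),
      Finset.sum_const]
    simp [Finset.card_range, nsmul_eq_mul]
  rw [hsum]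
  rw [ENNReal.toReal_mul, ENNReal.toReal_natCast,
    ENNReal.toReal_ofReal (by positivity)]
  push_cast
  field_simp

/-- If `F` is uniform on `[0,1]`, then for every positive integer `m`,
`sup_{x ∈ [0,1]} |F^{(m)}(x) − F(x)| = 1/(m+1)`; i.e. the lower bound rate
`O(1/(m+1))` for the K–S deviation of the binomial mixture CDF is attained. -/
theorem stmt4 (m : ℕ) (hm : 1 ≤ m) :
    (⨆ x : Set.Icc (0:ℝ) 1, |cdfOf (mixLaw unif m) x - cdfOf unif x|)
      = 1 / (m + 1) := by
  have hm0 : (0:ℝ) < m := by exact_mod_cast hm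
  have hub : ∀ x : ℝ, x ∈ Set.Icc (0:ℝ) 1 →
      |cdfOf (mixLaw unif m) x - cdfOf unif x| ≤ 1/((m:ℝ)+1) := by
    intro x hx
    rw [mix_cdf m hm x hx, cdf_unif x hx]
    obtain ⟨hx0, hx1⟩ := hx
    set N := ⌊(m:ℝ)*x⌋₊ with hN
    have hNle : (N:ℝ) ≤ (m:ℝ)*x := Nat.floor_le (by positivity)
    have hNgt : (m:ℝ)*x < (N:ℝ)+1 := by
      have := Nat.lt_floor_add_one ((m:ℝ)*x); push_cast at this ⊢; linarith
    have hA : (N:ℝ)/((m:ℝ)+1) ≤ x := by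
      rw [div_le_iff₀ (by positivity)]; nlinarith
    have hB : x ≤ ((N:ℝ)+2)/((m:ℝ)+1) := by
      rw [le_div_iff₀ (by positivity)]; nlinarith
    have e1 : ((N:ℝ)+2)/((m:ℝ)+1) = ((N:ℝ)+1)/((m:ℝ)+1) + 1/((m:ℝ)+1) := by ring
    have e2 : (N:ℝ)/((m:ℝ)+1) = ((N:ℝ)+1)/((m:ℝ)+1) - 1/((m:ℝ)+1) := by ring
    rw [abs_le]
    constructor <;> linarith
  apply le_antisymm
  · apply ciSup_le
    rintro ⟨x, hx⟩
    have := hub x hx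
    linarith
  · have h0 : (⟨0, by norm_num⟩ : Set.Icc (0:ℝ) 1) ∈ Set.univ := trivial
    have hval : |cdfOf (mixLaw unif m) 0 - cdfOf unif 0| = 1/((m:ℝ)+1) := by
      rw [mix_cdf m hm 0 (by norm_num), cdf_unif 0 (by norm_num)]
      simp
      positivity
    have hbdd : BddAbove (Set.range fun x : Set.Icc (0:ℝ) 1 =>
        |cdfOf (mixLaw unif m) x - cdfOf unif x|) := by
      refine ⟨1/((m:ℝ)+1), ?_⟩
      rintro _ ⟨⟨x, hx⟩, rfl⟩
      exact hub x hx
    have := le_ciSup hbdd (⟨0, by norm_num⟩ : Set.Icc (0:ℝ) 1)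
    rw [hval] at this
    linarith
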